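/- Let G be a group acting transitively on a finite set Ω with |Ω| = n ≥ 2. Then m(G)² ≥ n and m(G) ≤ ⌊n/2⌋ + 1 (equivalently, √n ≤ m(G) ≤ ⌈(n+1)/2⌉). -/

import Mathlib

open Pointwise

/-- A subset `A` of `Ω` is *non-self-separable* for the action of `G` if every translate
`g • A` meets `A`. -/
def NonSelfSep (G : Type*) [Group G] {Ω : Type*} [MulAction G Ω] (A : Set Ω) : Prop :=
  ∀ g : G, (A ∩ g • A).Nonempty

/-- `mParam G Ω` is the minimum cardinality of a non-self-separable subset of `Ω`. -/
noncomputable def mParam (G Ω : Type*) [Group G] [MulAction G Ω] : ℕ :=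
  sInf {k | ∃ A : Set Ω, A.ncard = k ∧ NonSelfSep G A}

open MulAction in
/-- Key counting lemma: for a finite group acting transitively, any non-self-separable
set has cardinality at least `√n`. -/
lemma key_count {K : Type*} [Group K] [Finite K] {Ω : Type*} [Fintype Ω]
    [MulAction K Ω] [MulAction.IsPretransitive K Ω]
    {A : Set Ω} (hA : NonSelfSep K A) :
    Fintype.card Ω ≤ A.ncard ^ 2 := by
  classical
  haveI : Fintype K := Fintype.ofFinite K
  set n := Fintype.card Ω with hn
  have hKpos : 0 < Fintype.card K := Fintype.card_pos
  -- transporter cardinality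
  have htrans : ∀ x y : Ω,
      ((Finset.univ.filter fun k : K => k • y = x).card) * n = Fintype.card K := by
    intro x y
    obtain ⟨k₀, hk₀⟩ := exists_smul_eq K y x
    have e : {k : K // k • y = x} ≃ stabilizer K y :=
      { toFun := fun k => ⟨k₀⁻¹ * k.1, by
          have := k.2
          simp only [mem_stabilizer_iff, mul_smul, this, ← hk₀, inv_smul_smul]⟩
        invFun := fun k => ⟨k₀ * k.1, by
          have : (k.1 : K) • y = y := k.2
          rw [mul_smul, this, hk₀]⟩
        left_inv := fun k => by simp
        right_inv := fun k => by simp }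
    have h1 : (Finset.univ.filter fun k : K => k • y = x).card
        = Nat.card {k : K // k • y = x} := by
      rw [Nat.card_eq_fintype_card, Fintype.card_subtype]
    rw [h1, Nat.card_congr e, Nat.card_eq_fintype_card]
    have h3 := (stabilizer K y).index_mul_card
    rw [index_stabilizer_of_transitive K y, Nat.card_eq_fintype_card,
      Nat.card_eq_fintype_card, Nat.card_eq_fintype_card] at h3
    rw [hn, mul_comm]
    exact h3
  obtain ⟨a0, ha0, -⟩ := hA 1
  haveI : Nonempty Ω := ⟨a0⟩
  set C := Fintype.card K / n with hC
  have hnpos : 0 < n := Fintype.card_pos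
  have htransC : ∀ x y : Ω,
      (Finset.univ.filter fun k : K => k • y = x).card = C := by
    intro x y
    have h := htrans x y
    rw [hC]
    exact (Nat.div_eq_of_eq_mul_left hnpos h.symm).symm
  -- the map sending each group element to a pair of elements of A
  have hchoose : ∀ k : K, (hA k).choose ∈ A ∩ k • A := fun k => (hA k).choose_spec
  set f : K → Ω × Ω := fun k => ((hA k).choose, k⁻¹ • (hA k).choose) with hf
  set A' : Finset Ω := A.toFinset with hA'
  have hmaps : ∀ k ∈ (Finset.univ : Finset K), f k ∈ A' ×ˢ A' := by
    intro k _
    obtain ⟨h1, h2⟩ := hchoose k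
    simp only [hf, Finset.mem_product, hA', Set.mem_toFinset]
    exact ⟨h1, by rwa [← Set.mem_smul_set_iff_inv_smul_mem]⟩
  have hfiber : ∀ p ∈ A' ×ˢ A',
      ((Finset.univ : Finset K).filter fun k => f k = p).card ≤ C := by
    rintro ⟨x, y⟩ _
    rw [← htransC x y]
    apply Finset.card_le_card
    intro k hk
    simp only [Finset.mem_filter, Finset.mem_univ, true_and, hf, Prod.mk.injEq] at hk ⊢
    obtain ⟨h1, h2⟩ := hk
    rw [h1] at h2
    rw [← h2, smul_inv_smul]
  have hcard : Fintype.card K ≤ C * (A' ×ˢ A').card := by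
    have := Finset.card_le_mul_card_image_of_maps_to hmaps C hfiber
    simpa using this
  have hA'card : (A' ×ˢ A').card = A.ncard ^ 2 := by
    rw [Finset.card_product, sq, hA', ← Set.ncard_eq_toFinset_card']
  rw [hA'card] at hcard
  -- multiply by n and cancel card K
  have h1 : n * Fintype.card K ≤ n * (C * A.ncard ^ 2) := Nat.mul_le_mul_left n hcard
  have h2 : n * C ≤ Fintype.card K := by
    rw [hC, mul_comm]
    exact Nat.div_mul_le_self _ _
  have h3 : n * (C * A.ncard ^ 2) = (n * C) * A.ncard ^ 2 := by ring
  have h4 : (n * C) * A.ncard ^ 2 ≤ Fintype.card K * A.ncard ^ 2 :=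
    Nat.mul_le_mul_right _ h2
  have h5 : n * Fintype.card K ≤ Fintype.card K * A.ncard ^ 2 := by omega
  rw [mul_comm n (Fintype.card K)] at h5
  exact Nat.le_of_mul_le_mul_left h5 hKpos

/-- For a group `G` acting transitively on a finite set `Ω` with
`|Ω| = n ≥ 2`, one has `√n ≤ m(G) ≤ ⌊n/2⌋ + 1`. -/
theorem stmt1 (G : Type*) [Group G] (Ω : Type*) [Fintype Ω]
    [MulAction G Ω] [MulAction.IsPretransitive G Ω]
    (n : ℕ) (hn : Fintype.card Ω = n) (h2 : 2 ≤ n) :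
    n ≤ mParam G Ω ^ 2 ∧ mParam G Ω ≤ n / 2 + 1 := by
  classical
  -- the set of achievable cardinalities
  set S : Set ℕ := {k | ∃ A : Set Ω, A.ncard = k ∧ NonSelfSep G A} with hS
  -- Upper bound witness: any set of size n/2+1 is non-self-separable
  have hle : n / 2 + 1 ≤ Fintype.card Ω := by omega
  obtain ⟨A', -, hA'card⟩ :=
    Finset.exists_subset_card_eq (s := (Finset.univ : Finset Ω)) (n := n / 2 + 1) (by simpa using hle)
  have hA'ns : NonSelfSep G (↑A' : Set Ω) := by
    intro g
    by_contra hemp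
    rw [Set.not_nonempty_iff_eq_empty] at hemp
    have hdisj : Disjoint (↑A' : Set Ω) (g • (↑A' : Set Ω)) :=
      Set.disjoint_iff_inter_eq_empty.mpr hemp
    have hsmul : (g • (↑A' : Set Ω)).ncard = (↑A' : Set Ω).ncard :=
      Set.ncard_smul_set g _
    have hunion : ((↑A' : Set Ω) ∪ g • (↑A' : Set Ω)).ncard
        = (↑A' : Set Ω).ncard + (g • (↑A' : Set Ω)).ncard :=
      Set.ncard_union_eq hdisj (Set.toFinite _) (Set.toFinite _)
    have hbig : ((↑A' : Set Ω) ∪ g • (↑A' : Set Ω)).ncard ≤ n := by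
      rw [← hn, ← Nat.card_eq_fintype_card, ← Set.ncard_univ Ω]
      exact Set.ncard_le_ncard (Set.subset_univ _) (Set.toFinite _)
    have hc : (↑A' : Set Ω).ncard = n / 2 + 1 := by
      rw [Set.ncard_coe_finset, hA'card]
    omega
  have hmem : (n / 2 + 1) ∈ S := ⟨↑A', by rw [Set.ncard_coe_finset, hA'card], hA'ns⟩
  have hSne : S.Nonempty := ⟨_, hmem⟩
  constructor
  · -- lower bound via the finite image group in Perm Ω
    obtain ⟨B, hBcard, hBns⟩ := Nat.sInf_mem hSne
    set K := (MulAction.toPermHom G Ω).range with hK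
    haveI : MulAction.IsPretransitive K Ω := by
      constructor
      intro x y
      obtain ⟨g, hg⟩ := MulAction.exists_smul_eq G x y
      refine ⟨⟨MulAction.toPermHom G Ω g, ⟨g, rfl⟩⟩, ?_⟩
      simpa using hg
    have hBnsK : NonSelfSep K B := by
      rintro ⟨k, g, rfl⟩
      have heq : (⟨MulAction.toPermHom G Ω g, ⟨g, rfl⟩⟩ : K) • B = g • B := by
        ext x
        simp only [Set.mem_smul_set]
        constructor
        · rintro ⟨b, hb, rfl⟩; exact ⟨b, hb, rfl⟩
        · rintro ⟨b, hb, rfl⟩; exact ⟨b, hb, rfl⟩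
      rw [heq]
      exact hBns g
    have := key_count (K := K) hBnsK
    rw [hn, hBcard] at this
    exact this
  · exact Nat.sInf_le hmem
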